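/- Let P ∈ ℝ^{n×n} be a row-stochastic matrix (all entries nonnegative, each row summing to 1), and let N be a random n×d real matrix whose entries N_{jk} are square-integrable, satisfy E[N_{jk}] = 0 and E[N_{jk}²] = σ², and are pairwise uncorrelated (E[N_{jk} N_{j'k'}] = 0 whenever (j,k) ≠ (j',k')). Then E[‖PN‖_F²] ≤ n·d·σ² = E[‖N‖_F²], where ‖·‖_F denotes the Frobenius norm. -/

import Mathlib

open Matrix MeasureTheory BigOperators

/-- The Frobenius norm of a real matrix. -/
noncomputable def frobNorm {m n : ℕ} (M : Matrix (Fin m) (Fin n) ℝ) : ℝ :=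
  Real.sqrt (∑ i, ∑ j, (M i j) ^ 2)

lemma memL2_mul_integrable {Ω : Type*} [MeasurableSpace Ω] {Pr : Measure Ω}
    {f g : Ω → ℝ} (hf : MemLp f 2 Pr) (hg : MemLp g 2 Pr) :
    Integrable (fun ω => f ω * g ω) Pr := by
  have h := (((hf.add hg).integrable_sq.sub hf.integrable_sq).sub hg.integrable_sq).div_const 2
  have heq : (fun ω => f ω * g ω)
      = fun ω => (((f ω + g ω) ^ 2 - f ω ^ 2) - g ω ^ 2) / 2 := by ext ω; ring
  rw [heq]; exact h

lemma frobNorm_sq {m n : ℕ} (M : Matrix (Fin m) (Fin n) ℝ) :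
    (frobNorm M) ^ 2 = ∑ i, ∑ j, (M i j) ^ 2 := by
  rw [frobNorm, Real.sq_sqrt]
  exact Finset.sum_nonneg fun i _ => Finset.sum_nonneg fun j _ => sq_nonneg _

/-- Second part of Theorem 2: a row-stochastic filter `P` does not increase the total
variance of mean-zero, pairwise-uncorrelated noise with entrywise variance `σ²`:
`E[‖P N‖_F²] ≤ n d σ² = E[‖N‖_F²]`. -/
theorem stmt3 {n d : ℕ} (P : Matrix (Fin n) (Fin n) ℝ)
    (hpos : ∀ i j, 0 ≤ P i j) (hsum : ∀ i, ∑ j, P i j = 1)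
    {Ω : Type*} [MeasurableSpace Ω] (Pr : Measure Ω) [IsProbabilityMeasure Pr]
    (N : Ω → Matrix (Fin n) (Fin d) ℝ) (σ : ℝ)
    (hL2 : ∀ j k, MemLp (fun ω => N ω j k) 2 Pr)
    (hmean : ∀ j k, (∫ ω, N ω j k ∂Pr) = 0)
    (hvar : ∀ j k, (∫ ω, (N ω j k) ^ 2 ∂Pr) = σ ^ 2)
    (huncorr : ∀ j k j' k', (j, k) ≠ (j', k') →
      (∫ ω, N ω j k * N ω j' k' ∂Pr) = 0) :
    (∫ ω, (frobNorm (P * N ω)) ^ 2 ∂Pr) ≤ (n : ℝ) * d * σ ^ 2 ∧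
      (n : ℝ) * d * σ ^ 2 = ∫ ω, (frobNorm (N ω)) ^ 2 ∂Pr := by
  have hint : ∀ (j : Fin n) (k : Fin d) (j' : Fin n) (k' : Fin d),
      Integrable (fun ω => N ω j k * N ω j' k') Pr := fun j k j' k' =>
    memL2_mul_integrable (hL2 j k) (hL2 j' k')
  have hPle1 : ∀ i j, P i j ≤ 1 := by
    intro i j
    calc P i j ≤ ∑ j', P i j' :=
          Finset.single_le_sum (fun j' _ => hpos i j') (Finset.mem_univ j)
      _ = 1 := hsum i
  -- entry of P * N
  have hentry : ∀ ω (i : Fin n) (k : Fin d),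
      ((P * N ω) i k) ^ 2 = ∑ j, ∑ j', P i j * P i j' * (N ω j k * N ω j' k) := by
    intro ω i k
    rw [Matrix.mul_apply, sq, Finset.sum_mul_sum]
    apply Finset.sum_congr rfl; intro j _
    apply Finset.sum_congr rfl; intro j' _
    ring
  have hintsum : ∀ (i : Fin n) (k : Fin d),
      Integrable (fun ω => ((P * N ω) i k) ^ 2) Pr := by
    intro i k
    have : Integrable (fun ω => ∑ j, ∑ j', P i j * P i j' * (N ω j k * N ω j' k)) Pr := by
      apply integrable_finset_sum; intro j _
      apply integrable_finset_sum; intro j' _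
      exact (hint j k j' k).const_mul _
    exact this.congr (Filter.Eventually.of_forall fun ω => (hentry ω i k).symm)
  have hEentry : ∀ (i : Fin n) (k : Fin d),
      (∫ ω, ((P * N ω) i k) ^ 2 ∂Pr) = ∑ j, (P i j) ^ 2 * σ ^ 2 := by
    intro i k
    have h1 : (∫ ω, ((P * N ω) i k) ^ 2 ∂Pr)
        = ∑ j, ∑ j', P i j * P i j' * ∫ ω, N ω j k * N ω j' k ∂Pr := by
      rw [integral_congr_ae (Filter.Eventually.of_forall fun ω => hentry ω i k)]
      rw [integral_finset_sum _ (fun j _ => integrable_finset_sum _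
        (fun j' _ => (hint j k j' k).const_mul _))]
      apply Finset.sum_congr rfl; intro j _
      rw [integral_finset_sum _ (fun j' _ => (hint j k j' k).const_mul _)]
      exact Finset.sum_congr rfl fun j' _ => integral_const_mul _ _
    rw [h1]
    apply Finset.sum_congr rfl; intro j _
    rw [Finset.sum_eq_single j]
    · have : (∫ ω, N ω j k * N ω j k ∂Pr) = σ ^ 2 := by
        rw [← hvar j k]; congr 1; ext ω; ring
      rw [this]; ring
    · intro j' _ hne
      rw [huncorr j k j' k (by simp [Ne.symm hne]), mul_zero]
    · intro h; exact absurd (Finset.mem_univ j) h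
  constructor
  · have hlhs : (∫ ω, (frobNorm (P * N ω)) ^ 2 ∂Pr)
        = ∑ i : Fin n, ∑ k : Fin d, ∑ j : Fin n, (P i j) ^ 2 * σ ^ 2 := by
      rw [integral_congr_ae (Filter.Eventually.of_forall fun ω => frobNorm_sq (P * N ω))]
      rw [integral_finset_sum _ (fun i _ => integrable_finset_sum _ (fun k _ => hintsum i k))]
      apply Finset.sum_congr rfl; intro i _
      rw [integral_finset_sum _ (fun k _ => hintsum i k)]
      exact Finset.sum_congr rfl fun k _ => hEentry i k
    rw [hlhs]
    have hbound : ∀ i : Fin n, ∑ j, (P i j) ^ 2 * σ ^ 2 ≤ σ ^ 2 := by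
      intro i
      calc ∑ j, (P i j) ^ 2 * σ ^ 2 ≤ ∑ j, P i j * σ ^ 2 := by
            apply Finset.sum_le_sum; intro j _
            apply mul_le_mul_of_nonneg_right _ (sq_nonneg σ)
            calc (P i j) ^ 2 = P i j * P i j := sq (P i j)
              _ ≤ P i j * 1 := mul_le_mul_of_nonneg_left (hPle1 i j) (hpos i j)
              _ = P i j := mul_one _
        _ = σ ^ 2 := by rw [← Finset.sum_mul, hsum i, one_mul]
    calc ∑ i, ∑ k : Fin d, ∑ j, (P i j) ^ 2 * σ ^ 2
        ≤ ∑ i : Fin n, ∑ k : Fin d, σ ^ 2 := by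
          apply Finset.sum_le_sum; intro i _
          exact Finset.sum_le_sum fun k _ => hbound i
      _ = (n : ℝ) * d * σ ^ 2 := by
          simp [Finset.sum_const, Finset.card_univ]; ring
  · have : (∫ ω, (frobNorm (N ω)) ^ 2 ∂Pr) = ∑ j : Fin n, ∑ k : Fin d, σ ^ 2 := by
      rw [integral_congr_ae (Filter.Eventually.of_forall fun ω => frobNorm_sq (N ω))]
      rw [integral_finset_sum _ (fun j _ => integrable_finset_sum _
        (fun k _ => ((hL2 j k).integrable_sq :)))]
      apply Finset.sum_congr rfl; intro j _
      rw [integral_finset_sum _ (fun k _ => ((hL2 j k).integrable_sq :))]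
      exact Finset.sum_congr rfl fun k _ => hvar j k
    rw [this]
    simp [Finset.sum_const, Finset.card_univ]; ring
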